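/- Let p ∈ [2,∞] and q ∈ [1,∞] with 2/p + 2/q = 1, and let g ∈ L^p(Ω,μ). Define G(x) ∈ ℝ^m by G(x)_i = g(x⁽ⁱ⁾). If K_q(Γ) < ∞, then E‖R(X)G(X)‖₂² ≤ n · m² · K_q(Γ) · ‖g‖²_{L^p(Ω)}. -/

import Mathlib

open MeasureTheory ProbabilityTheory ENNReal Matrix Filter

noncomputable section

/-- The smallest eigenvalue `s₁(A)` of the symmetric positive semidefinite matrix `AᵀA`. -/
def s1 {m n : ℕ} (A : Matrix (Fin m) (Fin n) ℝ) : ℝ :=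
  ⨅ i, (show (Aᵀ * A).IsHermitian from Matrix.isHermitian_conjTranspose_mul_self A).eigenvalues i

lemma Matrix.isHermitian_transpose_mul_self {m n : ℕ} (A : Matrix (Fin m) (Fin n) ℝ) :
    (Aᵀ * A).IsHermitian := Matrix.isHermitian_conjTranspose_mul_self A

/-- Euclidean norm on `ℝ^n`. -/
def enorm2 {n : ℕ} (v : Fin n → ℝ) : ℝ := Real.sqrt (∑ j, v j ^ 2)

/-- The matrix `Γ(x)` with entries `Γ(x)_{ij} = γ_j(x⁽ⁱ⁾)`. -/
def dmat {Ω : Type*} {n m : ℕ} (γ : Fin n → Ω → ℝ) (x : Fin m → Ω) :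
    Matrix (Fin m) (Fin n) ℝ := Matrix.of fun i j => γ j (x i)

/-- The matrix `R(x) = (Γ(x)ᵀΓ(x))⁻¹Γ(x)ᵀ`. -/
def Rmat {Ω : Type*} {n m : ℕ} (γ : Fin n → Ω → ℝ) (x : Fin m → Ω) :
    Matrix (Fin n) (Fin m) ℝ := ((dmat γ x)ᵀ * dmat γ x)⁻¹ * (dmat γ x)ᵀ

/-- `β(x) = R(x) F(x)` where `F(x)_i = f(x⁽ⁱ⁾)`. -/
def betaFn {Ω : Type*} {n m : ℕ} (γ : Fin n → Ω → ℝ) (f : Ω → ℝ) (x : Fin m → Ω) :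
    Fin n → ℝ := Rmat γ x *ᵥ fun i => f (x i)

/-- The residue `ρ(a)(ω) = f(ω) - ∑ j a_j γ_j(ω)`. -/
def resid {Ω : Type*} {n : ℕ} (γ : Fin n → Ω → ℝ) (f : Ω → ℝ) (a : Fin n → ℝ) : Ω → ℝ :=
  fun ω => f ω - ∑ j, a j * γ j ω
-- basic dot product transform
lemma vecMul_eq_star_mulVec {k : ℕ} (U : Matrix (Fin k) (Fin k) ℝ) (v : Fin k → ℝ) :
    vecMul v U = star U *ᵥ v := by
  rw [Matrix.star_eq_conjTranspose, conjTranspose_eq_transpose_of_trivial,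
    ← Matrix.vecMul_transpose, Matrix.transpose_transpose]

lemma rayleigh_lower {k : ℕ} {M : Matrix (Fin k) (Fin k) ℝ} (hM : M.IsHermitian) {c : ℝ}
    (hc : ∀ i, c ≤ hM.eigenvalues i) (v : Fin k → ℝ) :
    c * (v ⬝ᵥ v) ≤ v ⬝ᵥ (M *ᵥ v) := by
  set U : Matrix (Fin k) (Fin k) ℝ := (hM.eigenvectorUnitary : Matrix (Fin k) (Fin k) ℝ)
  have hU : U * star U = 1 := Matrix.mem_unitaryGroup_iff.mp hM.eigenvectorUnitary.2
  set y : Fin k → ℝ := star U *ᵥ v with hy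
  have h1 : v ⬝ᵥ (M *ᵥ v) = ∑ i, hM.eigenvalues i * (y i * y i) := by
    conv_lhs => rw [hM.spectral_theorem, Unitary.conjStarAlgAut_apply]
    rw [← Matrix.mulVec_mulVec, ← Matrix.mulVec_mulVec, Matrix.dotProduct_mulVec _ U,
      vecMul_eq_star_mulVec, ← hy]
    simp only [dotProduct, Matrix.mulVec_diagonal, Function.comp, RCLike.ofReal_real_eq_id, id]
    exact Finset.sum_congr rfl fun i _ => by ring
  have h2 : v ⬝ᵥ v = ∑ i, y i * y i := by
    have hv : U *ᵥ y = v := by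
      rw [hy, Matrix.mulVec_mulVec, hU, Matrix.one_mulVec]
    conv_lhs => rw [← hv]
    have hU' : star U * U = 1 := Matrix.mem_unitaryGroup_iff'.mp hM.eigenvectorUnitary.2
    rw [Matrix.dotProduct_mulVec, vecMul_eq_star_mulVec, Matrix.mulVec_mulVec, hU',
      Matrix.one_mulVec]
    rfl
  rw [h1, h2, Finset.mul_sum]
  exact Finset.sum_le_sum fun i _ => mul_le_mul_of_nonneg_right (hc i) (mul_self_nonneg _)


lemma tm_posSemidef {m n : ℕ} (A : Matrix (Fin m) (Fin n) ℝ) : (Aᵀ * A).PosSemidef := by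
  have := Matrix.posSemidef_conjTranspose_mul_self A
  rwa [conjTranspose_eq_transpose_of_trivial] at this

lemma eig_nonneg {m n : ℕ} (A : Matrix (Fin m) (Fin n) ℝ) (i : Fin n) :
    0 ≤ (Matrix.isHermitian_transpose_mul_self A).eigenvalues i :=
  (tm_posSemidef A).eigenvalues_nonneg i

lemma s1_nonneg {m n : ℕ} (A : Matrix (Fin m) (Fin n) ℝ) : 0 ≤ s1 A := by
  rcases isEmpty_or_nonempty (Fin n) with h | h
  · simp [s1, iInf_of_empty, Real.sInf_empty]
  · exact le_ciInf fun i => eig_nonneg A i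

lemma s1_le_eig {m n : ℕ} (A : Matrix (Fin m) (Fin n) ℝ) (i : Fin n) :
    s1 A ≤ (Matrix.isHermitian_transpose_mul_self A).eigenvalues i :=
  ciInf_le (Finite.bddBelow_range _) i

lemma s1_pos {m n : ℕ} (A : Matrix (Fin m) (Fin n) ℝ) (hn : 0 < n)
    (hdet : IsUnit (Aᵀ * A).det) : 0 < s1 A := by
  have : Nonempty (Fin n) := ⟨⟨0, hn⟩⟩
  have hne : ∀ i, (Matrix.isHermitian_transpose_mul_self A).eigenvalues i ≠ 0 := by
    intro i hi
    have hd := (Matrix.isHermitian_transpose_mul_self A).det_eq_prod_eigenvalues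
    rw [Finset.prod_eq_zero (Finset.mem_univ i) (by simp [hi])] at hd
    exact hdet.ne_zero hd
  obtain ⟨i0, hi0⟩ := Finite.exists_min (Matrix.isHermitian_transpose_mul_self A).eigenvalues
  have : s1 A = (Matrix.isHermitian_transpose_mul_self A).eigenvalues i0 :=
    le_antisymm (s1_le_eig A i0) (le_ciInf hi0)
  rw [this]
  exact lt_of_le_of_ne (eig_nonneg A i0) (Ne.symm (hne i0))

lemma dot_tm {m n : ℕ} (A : Matrix (Fin m) (Fin n) ℝ) (v : Fin n → ℝ) :
    v ⬝ᵥ ((Aᵀ * A) *ᵥ v) = (A *ᵥ v) ⬝ᵥ (A *ᵥ v) := by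
  rw [← Matrix.mulVec_mulVec, Matrix.dotProduct_mulVec, Matrix.vecMul_transpose]

lemma key_bound {m n : ℕ} (hn : 0 < n) (A : Matrix (Fin m) (Fin n) ℝ)
    (hdet : IsUnit (Aᵀ * A).det) (G : Fin m → ℝ) :
    ∑ j, (((Aᵀ * A)⁻¹ * Aᵀ) *ᵥ G) j ^ 2 ≤ (s1 A)⁻¹ * ∑ i, G i ^ 2 := by
  set M := Aᵀ * A with hM
  set v := (M⁻¹ * Aᵀ) *ᵥ G with hv
  have hMv : M *ᵥ v = Aᵀ *ᵥ G := by
    rw [hv, Matrix.mulVec_mulVec, Matrix.mul_nonsing_inv_cancel_left _ _ hdet]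
  set w := A *ᵥ v with hw
  set W := w ⬝ᵥ w with hWdef
  set SG := ∑ i, G i ^ 2 with hSG
  have hsp : 0 < s1 A := s1_pos A hn hdet
  have hW0 : 0 ≤ W := Finset.sum_nonneg fun i _ => mul_self_nonneg _
  have hSG0 : 0 ≤ SG := Finset.sum_nonneg fun i _ => sq_nonneg _
  have key1 : v ⬝ᵥ (M *ᵥ v) = W := dot_tm A v
  have key2 : v ⬝ᵥ (M *ᵥ v) = w ⬝ᵥ G := by
    rw [hMv, Matrix.dotProduct_mulVec, Matrix.vecMul_transpose]
  have hcs : (w ⬝ᵥ G) ^ 2 ≤ W * SG := by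
    have h := Finset.sum_mul_sq_le_sq_mul_sq Finset.univ w G
    calc (w ⬝ᵥ G) ^ 2 = (∑ i, w i * G i) ^ 2 := rfl
      _ ≤ (∑ i, w i ^ 2) * ∑ i, G i ^ 2 := h
      _ = W * SG := by rw [hWdef, hSG, dotProduct]; congr 1; exact Finset.sum_congr rfl fun i _ => pow_two _
  have hray : s1 A * (v ⬝ᵥ v) ≤ W := by
    rw [← key1]
    exact rayleigh_lower (Matrix.isHermitian_transpose_mul_self A) (s1_le_eig A) v
  have hWSG : W ≤ SG := by
    rcases le_or_gt W SG with h | h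
    · exact h
    · exfalso
      have hWpos : 0 < W := lt_of_le_of_lt hSG0 h
      rw [← key1, key2] at hcs
      nlinarith
  have hvd : ∑ j, v j ^ 2 = v ⬝ᵥ v := by
    simp [dotProduct, pow_two]
  rw [hvd]
  rw [inv_mul_eq_div, le_div_iff₀ hsp, mul_comm]
  exact le_trans hray hWSG

/-- Rayleigh quotient with explicit sums. -/
def rquot {m n : ℕ} (A : Matrix (Fin m) (Fin n) ℝ) (w : Fin n → ℝ) : ℝ :=
  (∑ i, (∑ j, A i j * w j) ^ 2) / (∑ j, w j ^ 2)

lemma rquot_eq_dot {m n : ℕ} (A : Matrix (Fin m) (Fin n) ℝ) (w : Fin n → ℝ) :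
    rquot A w = (w ⬝ᵥ ((Aᵀ * A) *ᵥ w)) / (w ⬝ᵥ w) := by
  rw [rquot, dot_tm]
  congr 1
  · exact Finset.sum_congr rfl fun i _ => by rw [pow_two]; rfl
  · exact Finset.sum_congr rfl fun j _ => pow_two _

lemma s1_le_rquot {m n : ℕ} (A : Matrix (Fin m) (Fin n) ℝ) {w : Fin n → ℝ} (hw : w ≠ 0) :
    s1 A ≤ rquot A w := by
  have hden : 0 < w ⬝ᵥ w := by
    obtain ⟨j0, hj0⟩ := Function.ne_iff.mp hw
    exact Finset.sum_pos' (fun j _ => mul_self_nonneg _)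
      ⟨j0, Finset.mem_univ _, mul_self_pos.mpr (by simpa using hj0)⟩
  rw [rquot_eq_dot, le_div_iff₀ hden]
  exact rayleigh_lower (Matrix.isHermitian_transpose_mul_self A) (s1_le_eig A) w

lemma s1_eq_iInf_rat {m n : ℕ} (hn : 0 < n) (A : Matrix (Fin m) (Fin n) ℝ) :
    s1 A = ⨅ v : {v : Fin n → ℚ // v ≠ 0}, rquot A (fun j => (v.1 j : ℝ)) := by
  have : Nonempty (Fin n) := ⟨⟨0, hn⟩⟩
  have hinst : Nonempty {v : Fin n → ℚ // v ≠ 0} := by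
    refine ⟨⟨Pi.single ⟨0, hn⟩ 1, ?_⟩⟩
    intro h
    have := congrFun h ⟨0, hn⟩
    simp [Pi.single_apply] at this
  have hcast : ∀ v : {v : Fin n → ℚ // v ≠ 0}, (fun j => (v.1 j : ℝ)) ≠ 0 := by
    intro v hv
    obtain ⟨j0, hj0⟩ := Function.ne_iff.mp v.2
    have h0 : (v.1 j0 : ℝ) = 0 := by simpa using congrFun hv j0
    have : v.1 j0 = 0 := by exact_mod_cast h0
    simpa [this] using hj0
  have hlb : ∀ v : {v : Fin n → ℚ // v ≠ 0}, s1 A ≤ rquot A (fun j => (v.1 j : ℝ)) :=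
    fun v => s1_le_rquot A (hcast v)
  have hbdd : BddBelow (Set.range fun v : {v : Fin n → ℚ // v ≠ 0} =>
      rquot A (fun j => (v.1 j : ℝ))) := ⟨s1 A, by rintro _ ⟨v, rfl⟩; exact hlb v⟩
  refine le_antisymm (le_ciInf hlb) ?_
  refine le_of_forall_pos_le_add ?_
  intro ε hε
  -- find the minimal eigenvalue attained at some index i0
  set hM := Matrix.isHermitian_transpose_mul_self A with hMdef
  obtain ⟨i0, hi0⟩ := Finite.exists_min hM.eigenvalues
  have hs1 : s1 A = hM.eigenvalues i0 := le_antisymm (s1_le_eig A i0) (le_ciInf hi0)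
  set u : Fin n → ℝ := ⇑(hM.eigenvectorBasis i0) with hu
  have hnorm : Real.sqrt (∑ j, u j ^ 2) = 1 := by
    have h1 : ‖hM.eigenvectorBasis i0‖ = 1 := hM.eigenvectorBasis.orthonormal.1 i0
    rw [EuclideanSpace.norm_eq] at h1
    simpa [Real.norm_eq_abs, sq_abs] using h1
  have husq : ∑ j, u j ^ 2 = 1 := by
    have := congrArg (· ^ 2) hnorm
    simpa [Real.sq_sqrt (Finset.sum_nonneg fun j _ => sq_nonneg (u j))] using this
  have hudot : u ⬝ᵥ u = 1 := by
    rw [show u ⬝ᵥ u = ∑ j, u j ^ 2 from Finset.sum_congr rfl fun j _ => (pow_two _).symm, husq]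
  have hune : u ≠ 0 := by
    intro h
    rw [h] at husq
    simp at husq
  have hMu : (Aᵀ * A) *ᵥ u = hM.eigenvalues i0 • u := hM.mulVec_eigenvectorBasis i0
  have hru : rquot A u = s1 A := by
    rw [rquot_eq_dot, hMu, dotProduct_smul, hudot, hs1]
    simp
  -- continuity of rquot A at u
  have hcont : ContinuousAt (rquot A) u := by
    have hc1 : Continuous fun w : Fin n → ℝ => ∑ i, (∑ j, A i j * w j) ^ 2 :=
      continuous_finset_sum _ fun i _ =>
        (continuous_finset_sum _ fun j _ => (continuous_const.mul (continuous_apply j))).pow 2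
    have hc2 : Continuous fun w : Fin n → ℝ => ∑ j, w j ^ 2 :=
      continuous_finset_sum _ fun j _ => (continuous_apply j).pow 2
    exact ContinuousAt.div hc1.continuousAt hc2.continuousAt
      (by rw [show ∑ j, u j ^ 2 = 1 from husq]; norm_num)
  rw [Metric.continuousAt_iff] at hcont
  obtain ⟨δ, hδ, hball⟩ := hcont ε hε
  obtain ⟨j0, hj0⟩ := Function.ne_iff.mp hune
  set δ' := min δ |u j0| with hδ'
  have hδ'pos : 0 < δ' := lt_min hδ (abs_pos.mpr hj0)
  -- choose a rational vector near u
  have hsel : ∀ j, ∃ q : ℚ, |u j - (q : ℝ)| < δ' := fun j => exists_rat_near (u j) hδ'pos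
  choose v hv using hsel
  have hvne : v ≠ 0 := by
    intro h
    have := hv j0
    rw [h] at this
    simp only [Pi.zero_apply, Rat.cast_zero, sub_zero] at this
    exact absurd (lt_of_lt_of_le this (min_le_right _ _)) (lt_irrefl _)
  have hdist : dist (fun j => (v j : ℝ)) u < δ := by
    rw [dist_pi_lt_iff hδ]
    intro j
    rw [Real.dist_eq, abs_sub_comm]
    exact lt_of_lt_of_le (hv j) (min_le_left _ _)
  have hclose := hball hdist
  rw [Real.dist_eq, hru] at hclose
  have : rquot A (fun j => (v j : ℝ)) < s1 A + ε := by
    have := abs_lt.mp hclose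
    linarith [this.2]
  exact le_trans (ciInf_le hbdd ⟨v, hvne⟩) this.le


lemma measurable_s1_dmat {Ω : Type*} [MeasurableSpace Ω] {n m : ℕ} (hn : 0 < n)
    (γ : Fin n → Ω → ℝ) (hγ : ∀ j, Measurable (γ j)) :
    Measurable fun x : Fin m → Ω => s1 (dmat γ x) := by
  have heq : (fun x : Fin m → Ω => s1 (dmat γ x)) =
      fun x => ⨅ v : {v : Fin n → ℚ // v ≠ 0}, rquot (dmat γ x) (fun j => (v.1 j : ℝ)) :=
    funext fun x => s1_eq_iInf_rat hn (dmat γ x)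
  rw [heq]
  refine Measurable.iInf fun v => ?_
  apply Measurable.div_const
  refine Finset.measurable_sum _ fun i _ => ?_
  refine Measurable.pow_const ?_ 2
  refine Finset.measurable_sum _ fun j _ => ?_
  exact ((hγ j).comp (measurable_pi_apply i)).mul_const _

open MeasureTheory in
lemma measurePreserving_eval_pi {Ω : Type*} [MeasurableSpace Ω] (μ : Measure Ω)
    [IsProbabilityMeasure μ] {m : ℕ} (i : Fin m) :
    MeasurePreserving (Function.eval i) (Measure.pi fun _ : Fin m => μ) μ := by
  refine ⟨measurable_pi_apply i, ?_⟩
  ext s hs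
  rw [Measure.map_apply (measurable_pi_apply i) hs, Set.eval_preimage,
    Measure.pi_pi]
  simp [Function.update_apply, apply_ite]

/-- Lemma 1 (b): for `p ∈ [2,∞]`, `2/p + 2/q = 1` and `g ∈ L^p(Ω,μ)`,
if `K_q(Γ) < ∞` then `E‖R(X)G(X)‖₂² ≤ n ⬝ m² ⬝ K_q(Γ) ⬝ ‖g‖²_{L^p(Ω)}`, where
`K_q(Γ) = (E[s₁(Γ(X))^{-q/2}])^{2/q} = ‖s₁(Γ(X))⁻¹‖_{L^{q/2}}`. -/
theorem stmt1 {Ω : Type*} [MeasurableSpace Ω] (μ : Measure Ω) [IsProbabilityMeasure μ]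
    (n m : ℕ) (hn : 1 ≤ n) (hm : 1 ≤ m)
    (γ : Fin n → Ω → ℝ) (hγ : ∀ j, Measurable (γ j))
    (f : Ω → ℝ) (hf : Measurable f)
    (hinv : ∀ᵐ x ∂(Measure.pi fun _ : Fin m => μ), IsUnit ((dmat γ x)ᵀ * dmat γ x).det)
    (p q : ℝ≥0∞) (hp : 2 ≤ p) (hq : 1 ≤ q) (hpq : 2 / p + 2 / q = 1)
    (g : Ω → ℝ) (hgm : Measurable g) (hg : MemLp g p μ)
    (hK : eLpNorm (fun x : Fin m → Ω => (s1 (dmat γ x))⁻¹) (q / 2)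
        (Measure.pi fun _ : Fin m => μ) < ⊤) :
    ∫⁻ x, ENNReal.ofReal (enorm2 (Rmat γ x *ᵥ fun i => g (x i))) ^ 2
        ∂(Measure.pi fun _ : Fin m => μ)
      ≤ n * m ^ 2 *
        eLpNorm (fun x : Fin m → Ω => (s1 (dmat γ x))⁻¹) (q / 2)
          (Measure.pi fun _ : Fin m => μ) *
        eLpNorm g p μ ^ 2 := by
  set ν := (Measure.pi fun _ : Fin m => μ) with hν
  set F : (Fin m → Ω) → ℝ := fun x => (s1 (dmat γ x))⁻¹ with hF
  set SG : (Fin m → Ω) → ℝ := fun x => ∑ i, g (x i) ^ 2 with hSGdef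
  have hn0 : 0 < n := hn
  have hFmeas : Measurable F := (measurable_s1_dmat hn0 γ hγ).inv
  have hSGmeas : Measurable SG :=
    Finset.measurable_sum _ fun i _ => ((hgm.comp (measurable_pi_apply i)).pow_const 2)
  have hFnn : ∀ x, 0 ≤ F x := fun x => inv_nonneg.mpr (s1_nonneg _)
  have hSGnn : ∀ x, 0 ≤ SG x := fun x => Finset.sum_nonneg fun i _ => sq_nonneg _
  have step1 : ∫⁻ x, ENNReal.ofReal (enorm2 (Rmat γ x *ᵥ fun i => g (x i))) ^ 2 ∂ν
      ≤ ∫⁻ x, (‖F x * SG x‖₊ : ℝ≥0∞) ∂ν := by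
    refine lintegral_mono_ae ?_
    filter_upwards [hinv] with x hx
    have hkey := key_bound hn0 (dmat γ x) hx (fun i => g (x i))
    have hnn : 0 ≤ ∑ j, (Rmat γ x *ᵥ fun i => g (x i)) j ^ 2 :=
      Finset.sum_nonneg fun j _ => sq_nonneg _
    calc ENNReal.ofReal (enorm2 (Rmat γ x *ᵥ fun i => g (x i))) ^ 2
        = ENNReal.ofReal (∑ j, (Rmat γ x *ᵥ fun i => g (x i)) j ^ 2) := by
          rw [enorm2, ← ENNReal.ofReal_pow (Real.sqrt_nonneg _), Real.sq_sqrt hnn]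
      _ ≤ ENNReal.ofReal (F x * SG x) := by
          refine ENNReal.ofReal_le_ofReal ?_
          simpa [Rmat] using hkey
      _ = (‖F x * SG x‖₊ : ℝ≥0∞) :=
          (Real.enorm_eq_ofReal (mul_nonneg (hFnn x) (hSGnn x))).symm
  have step2 : ∫⁻ x, (‖F x * SG x‖₊ : ℝ≥0∞) ∂ν = eLpNorm (fun x => F x * SG x) 1 ν :=
    by rw [eLpNorm_one_eq_lintegral_enorm]; rfl
  have hq0 : q ≠ 0 := fun h => by simp [h] at hq
  have hp0 : p ≠ 0 := fun h => by simp [h] at hp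
  have hpqr : (1 : ℝ≥0∞) / 1 = 1 / (q / 2) + 1 / (p / 2) := by
    rw [one_div (q / 2), one_div (p / 2),
      ENNReal.inv_div (Or.inl (by norm_num)) (Or.inl (by norm_num)),
      ENNReal.inv_div (Or.inl (by norm_num)) (Or.inl (by norm_num)),
      add_comm, hpq]
    norm_num
  have step3 : eLpNorm (fun x => F x * SG x) 1 ν ≤
      eLpNorm F (q / 2) ν * eLpNorm SG (p / 2) ν :=
    by simpa using (eLpNorm_le_eLpNorm_mul_eLpNorm_of_nnnorm
      (hpqr := ⟨by simpa only [one_div] using hpqr.symm⟩) hFmeas.aestronglyMeasurable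
      hSGmeas.aestronglyMeasurable (fun a c => a * c) 1
      (Filter.Eventually.of_forall fun x => by simp [nnnorm_mul]))
  have hp1 : (1 : ℝ≥0∞) ≤ p / 2 := by
    have := ENNReal.div_le_div_right hp 2
    rwa [ENNReal.div_self (by norm_num) (by norm_num)] at this
  have hterm : ∀ i : Fin m, eLpNorm (fun x : Fin m → Ω => g (x i) ^ 2) (p / 2) ν
      = eLpNorm g p μ ^ 2 := by
    intro i
    have h1 : (fun x : Fin m → Ω => g (x i) ^ 2)
        = fun x => ‖(g ∘ Function.eval i) x‖ ^ (2 : ℝ) := by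
      funext x
      rw [show ((2:ℝ)) = ((2:ℕ):ℝ) by norm_num, Real.rpow_natCast]
      simp [Function.comp, sq_abs]
    rw [h1, eLpNorm_norm_rpow _ (by norm_num : (0:ℝ) < 2)]
    rw [show ENNReal.ofReal (2:ℝ) = 2 by norm_num,
      ENNReal.div_mul_cancel (by norm_num) (by norm_num)]
    rw [eLpNorm_comp_measurePreserving hgm.aestronglyMeasurable
      (measurePreserving_eval_pi μ i)]
    rw [show ((2:ℝ)) = ((2:ℕ) : ℝ) by norm_num, ENNReal.rpow_natCast]
  have step4 : eLpNorm SG (p / 2) ν ≤ (m : ℝ≥0∞) * eLpNorm g p μ ^ 2 := by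
    have hsum : SG = ∑ i : Fin m, fun x : Fin m → Ω => g (x i) ^ 2 := by
      funext x
      rw [hSGdef]
      simp [Finset.sum_apply]
    rw [hsum]
    calc eLpNorm (∑ i : Fin m, fun x : Fin m → Ω => g (x i) ^ 2) (p / 2) ν
        ≤ ∑ i : Fin m, eLpNorm (fun x : Fin m → Ω => g (x i) ^ 2) (p / 2) ν :=
          eLpNorm_sum_le (fun i _ =>
            ((hgm.comp (measurable_pi_apply i)).pow_const 2).aestronglyMeasurable) hp1
      _ = (m : ℝ≥0∞) * eLpNorm g p μ ^ 2 := by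
          simp [hterm, Finset.sum_const, Finset.card_univ, nsmul_eq_mul]
  have hm2 : (m : ℝ≥0∞) ≤ (n : ℝ≥0∞) * (m : ℝ≥0∞) ^ 2 := by
    have h1 : (1 : ℝ≥0∞) ≤ (n : ℝ≥0∞) := by exact_mod_cast hn
    have h2 : (1 : ℝ≥0∞) ≤ (m : ℝ≥0∞) := by exact_mod_cast hm
    calc (m : ℝ≥0∞) = 1 * ((m : ℝ≥0∞) * 1) := by ring
      _ ≤ (n : ℝ≥0∞) * ((m : ℝ≥0∞) * (m : ℝ≥0∞)) :=
          mul_le_mul' h1 (mul_le_mul' le_rfl h2)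
      _ = (n : ℝ≥0∞) * (m : ℝ≥0∞) ^ 2 := by ring
  calc ∫⁻ x, ENNReal.ofReal (enorm2 (Rmat γ x *ᵥ fun i => g (x i))) ^ 2 ∂ν
      ≤ eLpNorm (fun x => F x * SG x) 1 ν := step2 ▸ step1
    _ ≤ eLpNorm F (q / 2) ν * eLpNorm SG (p / 2) ν := step3
    _ ≤ eLpNorm F (q / 2) ν * ((m : ℝ≥0∞) * eLpNorm g p μ ^ 2) :=
        mul_le_mul' le_rfl step4
    _ = (m : ℝ≥0∞) * (eLpNorm F (q / 2) ν * eLpNorm g p μ ^ 2) := by ring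
    _ ≤ ((n : ℝ≥0∞) * (m : ℝ≥0∞) ^ 2) * (eLpNorm F (q / 2) ν * eLpNorm g p μ ^ 2) :=
        mul_le_mul_left hm2 _
    _ = n * m ^ 2 * eLpNorm F (q / 2) ν * eLpNorm g p μ ^ 2 := by ring
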